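/- Let A and B be polynomials with real coefficients, regarded as functions ℝ → ℝ, and let λ ∈ ℝ. If E(A,B,λ)(x,y) = 0 for all real x and y, then both A and B have degree at most 2. -/

import Mathlib

open Polynomial

/-- The orthotoric expression `E(A,B,λ)(x,y)` associated to profile functions
`A, B : ℝ → ℝ` and a real parameter `λ`:  it equals `(x-y)⁴` times the operator `𝒮`
of the Bismut-Ricci-flat equation evaluated on the orthotoric Kähler ansatz. -/
noncomputable def orthoE (A B : ℝ → ℝ) (lam : ℝ) (x y : ℝ) : ℝ :=
  ((x - y) ^ 2 / 2) *
      (deriv (fun t => A t * deriv^[3] A t) x + deriv (fun t => B t * deriv^[3] B t) y +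
        deriv^[2] A x * deriv^[2] B y) -
    (x - y) *
      (A x * deriv^[3] A x - B y * deriv^[3] B y + deriv A x * deriv^[2] B y -
        deriv B y * deriv^[2] A x) +
    (A x + B y) * (deriv^[2] A x + deriv^[2] B y) -
    (1 / 2) * (deriv A x + deriv B y) ^ 2 - 2 * lam ^ 2

lemma polyDeriv1 (p : ℝ[X]) :
    deriv (fun x => p.eval x) = fun x => (derivative p).eval x :=
  funext fun _ => Polynomial.deriv p

lemma polyDeriv2 (p : ℝ[X]) :
    deriv^[2] (fun x => p.eval x) = fun x => (derivative (derivative p)).eval x := by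
  rw [Function.iterate_succ_apply, Function.iterate_one, polyDeriv1, polyDeriv1]

lemma polyDeriv3 (p : ℝ[X]) :
    deriv^[3] (fun x => p.eval x) =
      fun x => (derivative (derivative (derivative p))).eval x := by
  rw [Function.iterate_succ_apply, polyDeriv1, polyDeriv2]

lemma polyDerivMul (p q : ℝ[X]) (x : ℝ) :
    deriv (fun t => p.eval t * q.eval t) x = (derivative (p * q)).eval x := by
  have h : (fun t => p.eval t * q.eval t) = fun t => (p * q).eval t := by
    funext t; simp
  rw [h, Polynomial.deriv]

/-- Key one-sided lemma: if the orthotoric expression vanishes identically then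
the first profile polynomial has degree at most `2`. -/
lemma orthoE_key (A B : Polynomial ℝ) (lam : ℝ)
    (h : ∀ x y : ℝ, orthoE (fun x => A.eval x) (fun y => B.eval y) lam x y = 0) :
    A.natDegree ≤ 2 := by
  by_contra hA
  push_neg at hA
  obtain ⟨m, hm⟩ : ∃ m, A.natDegree = m + 3 := ⟨A.natDegree - 3, by omega⟩
  have hAne : A ≠ 0 := fun h0 => by simp [h0] at hm
  have hc : A.coeff (m + 3) ≠ 0 := by
    rw [← hm, coeff_natDegree]; exact leadingCoeff_ne_zero.mpr hAne
  set c : ℝ := A.coeff (m + 3) with hcdef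
  -- the polynomial form of `x ↦ orthoE A B lam x 0`
  have hq0 :
      (C (2⁻¹ : ℝ) * (X ^ 2 *
          (derivative (A * derivative (derivative (derivative A)))
            + C (eval 0 (derivative (B * derivative (derivative (derivative B)))))
            + C (eval 0 (derivative (derivative B))) * derivative (derivative A)))
        - X * (A * derivative (derivative (derivative A))
            - C (eval 0 B * eval 0 (derivative (derivative (derivative B))))
            + C (eval 0 (derivative (derivative B))) * derivative A
            - C (eval 0 (derivative B)) * derivative (derivative A))
        + (A + C (eval 0 B)) *
            (derivative (derivative A) + C (eval 0 (derivative (derivative B))))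
        - C (2⁻¹ : ℝ) * (derivative A + C (eval 0 (derivative B))) ^ 2
        - C (2 * lam ^ 2) : ℝ[X]) = 0 := by
    apply Polynomial.funext
    intro x
    rw [eval_zero]
    refine Eq.trans ?_ (h x 0)
    simp only [orthoE, polyDeriv3, polyDeriv2, polyDeriv1, polyDerivMul,
      eval_add, eval_sub, eval_mul, eval_pow, eval_C, eval_X]
    ring
  have hco := congrArg (fun p : ℝ[X] => p.coeff (2 * m + 4)) hq0
  simp only [coeff_zero] at hco
  -- degree bounds
  have hdA : A.natDegree ≤ m + 3 := le_of_eq hm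
  have hdA1 : (derivative A).natDegree ≤ m + 2 := by
    have := natDegree_derivative_le A; omega
  have hdA2 : (derivative (derivative A)).natDegree ≤ m + 1 := by
    have := natDegree_derivative_le (derivative A); omega
  have hdA3 : (derivative (derivative (derivative A))).natDegree ≤ m := by
    have := natDegree_derivative_le (derivative (derivative A)); omega
  have hdP : (A * derivative (derivative (derivative A))).natDegree ≤ 2 * m + 3 := by
    have := natDegree_mul_le (p := A) (q := derivative (derivative (derivative A))); omega
  have hdD : (derivative (A * derivative (derivative (derivative A)))).natDegree
      ≤ 2 * m + 2 := by
    have := natDegree_derivative_le (A * derivative (derivative (derivative A))); omega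
  -- coefficient values
  have cA1 : (derivative A).coeff (m + 2) = c * (m + 3 : ℝ) := by
    rw [coeff_derivative, ← hcdef] <;> (push_cast; try ring)
  have cA2 : (derivative (derivative A)).coeff (m + 1)
      = c * (m + 3 : ℝ) * (m + 2 : ℝ) := by
    rw [coeff_derivative, cA1] <;> (push_cast; try ring)
  have cA3 : (derivative (derivative (derivative A))).coeff m
      = c * (m + 3 : ℝ) * (m + 2 : ℝ) * (m + 1 : ℝ) := by
    rw [coeff_derivative, cA2] <;> (push_cast; try ring)
  have cP : (A * derivative (derivative (derivative A))).coeff (2 * m + 3)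
      = c * (c * (m + 3 : ℝ) * (m + 2 : ℝ) * (m + 1 : ℝ)) := by
    have h' := coeff_mul_add_eq_of_natDegree_le hdA hdA3
    rw [show (m + 3) + m = 2 * m + 3 by omega] at h'
    rw [h', ← hcdef, cA3]
  have cD : (derivative (A * derivative (derivative (derivative A)))).coeff (2 * m + 2)
      = c * (c * (m + 3 : ℝ) * (m + 2 : ℝ) * (m + 1 : ℝ)) * (2 * m + 3 : ℝ) := by
    rw [coeff_derivative, cP] <;> (push_cast; try ring)
  -- the coefficient of each summand
  have e1 : (X ^ 2 *
        (derivative (A * derivative (derivative (derivative A)))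
          + C (eval 0 (derivative (B * derivative (derivative (derivative B)))))
          + C (eval 0 (derivative (derivative B))) * derivative (derivative A))).coeff
          (2 * m + 4)
      = c * (c * (m + 3 : ℝ) * (m + 2 : ℝ) * (m + 1 : ℝ)) * (2 * m + 3 : ℝ) := by
    rw [show 2 * m + 4 = (2 * m + 2) + 2 by omega, coeff_X_pow_mul]
    rw [coeff_add, coeff_add, cD, coeff_C, if_neg (by omega), coeff_C_mul,
      coeff_eq_zero_of_natDegree_lt
        (by omega : (derivative (derivative A)).natDegree < 2 * m + 2)]
    ring
  have e2 : (X * (A * derivative (derivative (derivative A))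
        - C (eval 0 B * eval 0 (derivative (derivative (derivative B))))
        + C (eval 0 (derivative (derivative B))) * derivative A
        - C (eval 0 (derivative B)) * derivative (derivative A))).coeff (2 * m + 4)
      = c * (c * (m + 3 : ℝ) * (m + 2 : ℝ) * (m + 1 : ℝ)) := by
    rw [show 2 * m + 4 = (2 * m + 3) + 1 by omega, coeff_X_mul]
    rw [coeff_sub, coeff_add, coeff_sub, cP, coeff_C, if_neg (by omega), coeff_C_mul,
      coeff_C_mul,
      coeff_eq_zero_of_natDegree_lt (by omega : (derivative A).natDegree < 2 * m + 3),
      coeff_eq_zero_of_natDegree_lt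
        (by omega : (derivative (derivative A)).natDegree < 2 * m + 3)]
    ring
  have e3 : ((A + C (eval 0 B)) *
        (derivative (derivative A) + C (eval 0 (derivative (derivative B))))).coeff
          (2 * m + 4)
      = c * (c * (m + 3 : ℝ) * (m + 2 : ℝ)) := by
    have hb : (A + C (eval 0 B)).natDegree ≤ m + 3 :=
      natDegree_add_le_of_degree_le hdA (by simp)
    have hb2 : (derivative (derivative A)
        + C (eval 0 (derivative (derivative B)))).natDegree ≤ m + 1 :=
      natDegree_add_le_of_degree_le hdA2 (by simp)
    have h' := coeff_mul_add_eq_of_natDegree_le hb hb2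
    rw [show (m + 3) + (m + 1) = 2 * m + 4 by omega] at h'
    rw [h', coeff_add, coeff_add, coeff_C, coeff_C, if_neg (by omega), if_neg (by omega),
      ← hcdef, cA2]
    ring
  have e4 : ((derivative A + C (eval 0 (derivative B))) ^ 2).coeff (2 * m + 4)
      = (c * (m + 3 : ℝ)) ^ 2 := by
    have hb : (derivative A + C (eval 0 (derivative B))).natDegree ≤ m + 2 :=
      natDegree_add_le_of_degree_le hdA1 (by simp)
    rw [sq]
    have h' := coeff_mul_add_eq_of_natDegree_le hb hb
    rw [show (m + 2) + (m + 2) = 2 * m + 4 by omega] at h'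
    rw [h', coeff_add, coeff_C, if_neg (by omega), cA1]
    ring
  simp only [coeff_sub, coeff_add, coeff_C_mul] at hco
  rw [e1, e2, e3, e4, coeff_C, if_neg (by omega)] at hco
  -- derive the contradiction
  have hM : (0 : ℝ) ≤ (m : ℝ) := Nat.cast_nonneg m
  have hfin : c ^ 2 *
      (((m : ℝ) + 3) * ((m : ℝ) + 1) ^ 2 * (2 * (m : ℝ) + 3)) / 2 = 0 := by
    rw [← hco] <;> (push_cast; try ring)
  have hc2 : 0 < c ^ 2 := pow_two_pos_of_ne_zero hc
  have hpos : 0 < ((m : ℝ) + 3) * ((m : ℝ) + 1) ^ 2 * (2 * (m : ℝ) + 3) := by positivity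
  nlinarith [mul_pos hc2 hpos]

theorem stmt_1 (A B : Polynomial ℝ) (lam : ℝ)
    (h : ∀ x y : ℝ, orthoE (fun x => A.eval x) (fun y => B.eval y) lam x y = 0) :
    A.natDegree ≤ 2 ∧ B.natDegree ≤ 2 := by
  have hsym : ∀ x y : ℝ, orthoE (fun x => B.eval x) (fun y => A.eval y) lam x y = 0 := by
    intro x y
    rw [← h y x]
    unfold orthoE
    ring
  exact ⟨orthoE_key A B lam h, orthoE_key B A lam hsym⟩
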